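/- For every n ≥ 4 and every natural number c, the number M^{Irr}_{n,c} of irreducible meandric permutations of {1,…,n} with exactly c cups is even, i.e., M^{Irr}_{n,c} ≡ 0 (mod 2). -/

import Mathlib

namespace MeanderFormal

/-- The normalized chord with endpoints `a` and `b`. -/
def chord (a b : ℕ) : ℕ × ℕ := (min a b, max a b)

/-- Two normalized chords `{p.1,p.2}` and `{q.1,q.2}` cross. -/
def Cross (p q : ℕ × ℕ) : Prop :=
  (p.1 < q.1 ∧ q.1 < p.2 ∧ p.2 < q.2) ∨ (q.1 < p.1 ∧ p.1 < q.2 ∧ q.2 < p.2)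

/-- A system of chords is pairwise noncrossing. -/
def Noncrossing (S : Set (ℕ × ℕ)) : Prop :=
  ∀ p ∈ S, ∀ q ∈ S, ¬ Cross p q

/-- One-indexed value sequence of a permutation of `Fin n`:
`val σ k = a_k ∈ {1,…,n}` for `1 ≤ k ≤ n`, and `0` otherwise. -/
def val {n : ℕ} (σ : Equiv.Perm (Fin n)) (k : ℕ) : ℕ :=
  if h : 1 ≤ k ∧ k ≤ n then ((σ ⟨k - 1, by omega⟩ : Fin n) : ℕ) + 1 else 0

/-- The upper chord system of a permutation, on the points `{0,1,…,n+1}`. -/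
def upperChords {n : ℕ} (σ : Equiv.Perm (Fin n)) : Set (ℕ × ℕ) :=
  {chord 0 (val σ 1)}
    ∪ {c | ∃ k, 1 ≤ k ∧ 2 * k < n ∧ c = chord (val σ (2 * k)) (val σ (2 * k + 1))}
    ∪ {c | n % 2 = 0 ∧ c = chord (val σ n) (n + 1)}

/-- The lower chord system of a permutation, on the points `{0,1,…,n+1}`. -/
def lowerChords {n : ℕ} (σ : Equiv.Perm (Fin n)) : Set (ℕ × ℕ) :=
  {c | ∃ k, 1 ≤ k ∧ 2 * k ≤ n ∧ c = chord (val σ (2 * k - 1)) (val σ (2 * k))}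
    ∪ {c | n % 2 = 1 ∧ c = chord (val σ n) (n + 1)}

/-- `σ` is a meandric permutation. -/
def IsMeandric {n : ℕ} (σ : Equiv.Perm (Fin n)) : Prop :=
  Noncrossing (upperChords σ) ∧ Noncrossing (lowerChords σ)

/-- A set of naturals is an interval of consecutive integers. -/
def IsInterval (S : Set ℕ) : Prop :=
  ∀ x ∈ S, ∀ y ∈ S, ∀ z, x ≤ z → z ≤ y → z ∈ S

/-- A double interval of `σ`: a nonempty interval `S ⊆ {1,…,n}` whose set of
positions (preimage) is also an interval. -/
def IsDoubleInterval {n : ℕ} (σ : Equiv.Perm (Fin n)) (S : Set ℕ) : Prop :=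
  S.Nonempty ∧ S ⊆ Set.Icc 1 n ∧ IsInterval S ∧
    IsInterval {k | k ∈ Set.Icc 1 n ∧ val σ k ∈ S}

/-- `σ` is irreducible: no double interval of width `w` with `2 < w < n`. -/
def IsIrreducible {n : ℕ} (σ : Equiv.Perm (Fin n)) : Prop :=
  ¬ ∃ S : Set ℕ, IsDoubleInterval σ S ∧ 2 < S.ncard ∧ S.ncard < n

/-- A cup of `σ`: a double interval of width 2. -/
def IsCup {n : ℕ} (σ : Equiv.Perm (Fin n)) (S : Set ℕ) : Prop :=
  IsDoubleInterval σ S ∧ S.ncard = 2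

/-- The number of cups of `σ`. -/
noncomputable def cupCount {n : ℕ} (σ : Equiv.Perm (Fin n)) : ℕ :=
  Set.ncard {S : Set ℕ | IsCup σ S}

/-- `S₁` is covered by `S₂` among the double intervals of `σ`. -/
def Covers {n : ℕ} (σ : Equiv.Perm (Fin n)) (S₁ S₂ : Set ℕ) : Prop :=
  S₁ ⊂ S₂ ∧ ¬ ∃ S' : Set ℕ, IsDoubleInterval σ S' ∧ S₁ ⊂ S' ∧ S' ⊂ S₂

/-- The decomposition graph of `σ`: vertices are double intervals, adjacency is
the covering relation (in either direction). -/
def decompGraph {n : ℕ} (σ : Equiv.Perm (Fin n)) :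
    SimpleGraph {S : Set ℕ // IsDoubleInterval σ S} where
  Adj A B := Covers σ A.1 B.1 ∨ Covers σ B.1 A.1
  symm := ⟨fun A B h => Or.symm h⟩
  loopless := by
    constructor
    intro A h
    rcases h with h | h <;> exact h.1.ne rfl

/-- `v` is an articulation point of `G`: deleting it increases the number of
connected components. -/
def IsArticulationPoint {V : Type*} (G : SimpleGraph V) (v : V) : Prop :=
  Nat.card G.ConnectedComponent <
    Nat.card ((G.induce {u : V | u ≠ v}).ConnectedComponent)

/-- A snake: a meandric permutation whose decomposition graph has no
articulation point. -/
def IsSnake {n : ℕ} (σ : Equiv.Perm (Fin n)) : Prop :=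
  IsMeandric σ ∧ ∀ v, ¬ IsArticulationPoint (decompGraph σ) v

/-- The reversal permutation `(n, n-1, …, 1)`. -/
def reversalPerm (n : ℕ) : Equiv.Perm (Fin n) :=
  ⟨Fin.rev, Fin.rev, Fin.rev_rev, Fin.rev_rev⟩

/-- The number `M_n` of meandric permutations of `{1,…,n}`. -/
noncomputable def meanderCount (n : ℕ) : ℕ :=
  Nat.card {σ : Equiv.Perm (Fin n) // IsMeandric σ}

/-- The number of snakes of order `n`. -/
noncomputable def snakeCount (n : ℕ) : ℕ :=
  Nat.card {σ : Equiv.Perm (Fin n) // IsSnake σ}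

/-- The number `M^{Irr}_n` of irreducible meandric permutations of `{1,…,n}`. -/
noncomputable def irrCount (n : ℕ) : ℕ :=
  Nat.card {σ : Equiv.Perm (Fin n) // IsMeandric σ ∧ IsIrreducible σ}

/-- The number `M^{Irr}_{n,c}` of irreducible meandric permutations of `{1,…,n}`
with exactly `c` cups. -/
noncomputable def irrCupCount (n c : ℕ) : ℕ :=
  Nat.card {σ : Equiv.Perm (Fin n) // IsMeandric σ ∧ IsIrreducible σ ∧ cupCount σ = c}


-- evenness pairing lemma
lemma even_finset_card {α : Type*} [DecidableEq α] (f : α → α) (hf : Function.Involutive f)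
    (hne : ∀ a, f a ≠ a) : ∀ s : Finset α, (∀ a ∈ s, f a ∈ s) → 2 ∣ s.card := by
  intro s
  induction s using Finset.strongInduction with
  | _ s ih =>
    intro hs
    rcases s.eq_empty_or_nonempty with rfl | ⟨a, ha⟩
    · simp
    · have hfa : f a ∈ s := hs a ha
      have hne' : f a ≠ a := hne a
      set t := (s.erase a).erase (f a) with ht
      have htsub : t ⊂ s := by
        refine Finset.ssubset_of_subset_of_ssubset ?_ (Finset.erase_ssubset ha)
        exact Finset.erase_subset _ _
      have hcard : t.card + 2 = s.card := by
        rw [ht, Finset.card_erase_of_mem, Finset.card_erase_of_mem ha]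
        · have : 2 ≤ s.card := Finset.one_lt_card.mpr ⟨a, ha, f a, hfa, fun h => hne' h.symm⟩
          omega
        · exact Finset.mem_erase.mpr ⟨hne', hfa⟩
      have hclosed : ∀ b ∈ t, f b ∈ t := by
        intro b hb
        rw [ht, Finset.mem_erase, Finset.mem_erase] at hb ⊢
        obtain ⟨hb1, hb2, hb3⟩ := hb
        refine ⟨?_, ?_, hs b hb3⟩
        · intro h; exact hb2 (hf.injective h)
        · intro h; exact hb1 (by rw [← hf b, h])
      have := ih t htsub hclosed
      omega

lemma even_card_of_involutive {α : Type*} [Finite α] (f : α → α)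
    (hf : Function.Involutive f) (hne : ∀ a, f a ≠ a) : 2 ∣ Nat.card α := by
  classical
  cases nonempty_fintype α
  rw [Nat.card_eq_fintype_card, ← Finset.card_univ]
  exact even_finset_card f hf hne Finset.univ (fun a _ => Finset.mem_univ _)

-- val lemmas
lemma val_mem {n : ℕ} (σ : Equiv.Perm (Fin n)) {k : ℕ} (h1 : 1 ≤ k) (h2 : k ≤ n) :
    1 ≤ val σ k ∧ val σ k ≤ n := by
  rw [val, dif_pos ⟨h1, h2⟩]
  have := (σ ⟨k - 1, by omega⟩).isLt
  omega

lemma val_inj {n : ℕ} (σ : Equiv.Perm (Fin n)) {k l : ℕ} (hk1 : 1 ≤ k) (hk2 : k ≤ n)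
    (hl1 : 1 ≤ l) (hl2 : l ≤ n) (h : val σ k = val σ l) : k = l := by
  rw [val, dif_pos ⟨hk1, hk2⟩, val, dif_pos ⟨hl1, hl2⟩] at h
  have h2 : σ ⟨k - 1, by omega⟩ = σ ⟨l - 1, by omega⟩ := Fin.ext (by omega)
  have h3 : k - 1 = l - 1 := Fin.mk_eq_mk.mp (σ.injective h2)
  omega

lemma val_mul_rev {n : ℕ} (σ : Equiv.Perm (Fin n)) {k : ℕ} (h1 : 1 ≤ k) (h2 : k ≤ n) :
    val (σ * reversalPerm n) k = val σ (n + 1 - k) := by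
  have h1' : 1 ≤ n + 1 - k := by omega
  have h2' : n + 1 - k ≤ n := by omega
  rw [val, dif_pos ⟨h1, h2⟩, val, dif_pos ⟨h1', h2'⟩]
  have hr : ∀ x : Fin n, reversalPerm n x = Fin.rev x := fun x => rfl
  have e : (Fin.rev ⟨k - 1, by omega⟩ : Fin n) = ⟨n + 1 - k - 1, by omega⟩ := by
    apply Fin.ext; rw [Fin.val_rev]; show n - (k - 1 + 1) = n + 1 - k - 1; omega
  rw [Equiv.Perm.mul_apply, hr, e]

lemma val_conj_rev {n : ℕ} (σ : Equiv.Perm (Fin n)) {k : ℕ} (h1 : 1 ≤ k) (h2 : k ≤ n) :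
    val (reversalPerm n * σ * reversalPerm n) k = n + 1 - val σ (n + 1 - k) := by
  have h1' : 1 ≤ n + 1 - k := by omega
  have h2' : n + 1 - k ≤ n := by omega
  rw [val, dif_pos ⟨h1, h2⟩, val, dif_pos ⟨h1', h2'⟩]
  have hr : ∀ x : Fin n, reversalPerm n x = Fin.rev x := fun x => rfl
  have e : (⟨n + 1 - k - 1, by omega⟩ : Fin n) = Fin.rev ⟨k - 1, by omega⟩ := by
    apply Fin.ext
    rw [Fin.val_rev]
    show n + 1 - k - 1 = n - (k - 1 + 1)
    omega
  rw [Equiv.Perm.mul_apply, Equiv.Perm.mul_apply, hr, hr, e]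
  rw [Fin.val_rev]
  have := (σ (Fin.rev ⟨k - 1, by omega⟩)).isLt
  omega

-- Cross helpers
lemma cross_comm {p q : ℕ × ℕ} : Cross p q ↔ Cross q p := by unfold Cross; tauto

lemma chord_comm (a b : ℕ) : chord a b = chord b a := by
  simp [chord, min_comm, max_comm]

lemma not_cross_self (p : ℕ × ℕ) : ¬ Cross p p := by unfold Cross; omega

lemma cross_zero_iff {n : ℕ} {b c d : ℕ} (hb1 : 1 ≤ b) (hbn : b ≤ n) (hc1 : 1 ≤ c)
    (hcn : c ≤ n) (hd1 : 1 ≤ d) (hdn : d ≤ n) :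
    Cross (chord 0 b) (chord c d) ↔ Cross (chord b (n + 1)) (chord c d) := by
  simp only [chord, Cross]
  omega

lemma cross_mirror {n : ℕ} {a b c d : ℕ} (ha : a ≤ n + 1) (hb : b ≤ n + 1) (hc : c ≤ n + 1)
    (hd : d ≤ n + 1) :
    Cross (chord (n + 1 - a) (n + 1 - b)) (chord (n + 1 - c) (n + 1 - d)) ↔
      Cross (chord a b) (chord c d) := by
  simp only [chord, Cross]
  omega


-- membership lemmas
lemma mem_upperChords {n : ℕ} (σ : Equiv.Perm (Fin n)) (p : ℕ × ℕ) :
    p ∈ upperChords σ ↔ p = chord 0 (val σ 1) ∨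
      (∃ k, 1 ≤ k ∧ 2 * k < n ∧ p = chord (val σ (2 * k)) (val σ (2 * k + 1))) ∨
      (n % 2 = 0 ∧ p = chord (val σ n) (n + 1)) := by
  simp [upperChords, Set.mem_union, Set.mem_setOf_eq, Set.mem_singleton_iff, or_assoc]

lemma mem_lowerChords {n : ℕ} (σ : Equiv.Perm (Fin n)) (p : ℕ × ℕ) :
    p ∈ lowerChords σ ↔
      (∃ k, 1 ≤ k ∧ 2 * k ≤ n ∧ p = chord (val σ (2 * k - 1)) (val σ (2 * k))) ∨
      (n % 2 = 1 ∧ p = chord (val σ n) (n + 1)) := by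
  simp [lowerChords, Set.mem_union, Set.mem_setOf_eq]

-- structure of upper chords of σ * rev, n odd
lemma upper_mul_rev_struct {n : ℕ} {σ : Equiv.Perm (Fin n)} (hn : n % 2 = 1) {p : ℕ × ℕ}
    (hp : p ∈ upperChords (σ * reversalPerm n)) :
    p = chord 0 (val σ n) ∨
      (∃ c d, 1 ≤ c ∧ c ≤ n ∧ 1 ≤ d ∧ d ≤ n ∧ p = chord c d ∧ p ∈ lowerChords σ) := by
  have hn1 : 1 ≤ n := by omega
  rw [mem_upperChords] at hp
  rcases hp with hp | ⟨k, hk1, hk2, hp⟩ | ⟨h0, _⟩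
  · left
    rw [hp, val_mul_rev σ (le_refl 1) hn1]
    norm_num
  · right
    rw [val_mul_rev σ (by omega : 1 ≤ 2 * k) (by omega : 2 * k ≤ n),
        val_mul_rev σ (by omega : 1 ≤ 2 * k + 1) (by omega : 2 * k + 1 ≤ n)] at hp
    refine ⟨val σ (n + 1 - 2 * k), val σ (n + 1 - (2 * k + 1)), 
      (val_mem σ (by omega) (by omega)).1, (val_mem σ (by omega) (by omega)).2,
      (val_mem σ (by omega) (by omega)).1, (val_mem σ (by omega) (by omega)).2, hp, ?_⟩
    rw [mem_lowerChords]
    left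
    refine ⟨(n + 1) / 2 - k, by omega, by omega, ?_⟩
    rw [hp, chord_comm]
    rw [show 2 * ((n + 1) / 2 - k) - 1 = n + 1 - (2 * k + 1) from by omega,
        show 2 * ((n + 1) / 2 - k) = n + 1 - 2 * k from by omega]
  · omega

-- structure of lower chords of σ * rev, n odd
lemma lower_mul_rev_struct {n : ℕ} {σ : Equiv.Perm (Fin n)} (hn : n % 2 = 1) {p : ℕ × ℕ}
    (hp : p ∈ lowerChords (σ * reversalPerm n)) :
    p = chord (val σ 1) (n + 1) ∨
      (∃ c d, 1 ≤ c ∧ c ≤ n ∧ 1 ≤ d ∧ d ≤ n ∧ p = chord c d ∧ p ∈ upperChords σ) := by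
  have hn1 : 1 ≤ n := by omega
  rw [mem_lowerChords] at hp
  rcases hp with ⟨k, hk1, hk2, hp⟩ | ⟨h0, hp⟩
  · right
    have hk2' : 2 * k ≤ n - 1 := by omega
    rw [val_mul_rev σ (by omega : 1 ≤ 2 * k - 1) (by omega : 2 * k - 1 ≤ n),
        val_mul_rev σ (by omega : 1 ≤ 2 * k) (by omega : 2 * k ≤ n)] at hp
    refine ⟨val σ (n + 1 - (2 * k - 1)), val σ (n + 1 - 2 * k),
      (val_mem σ (by omega) (by omega)).1, (val_mem σ (by omega) (by omega)).2,
      (val_mem σ (by omega) (by omega)).1, (val_mem σ (by omega) (by omega)).2, hp, ?_⟩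
    rw [mem_upperChords]
    right; left
    refine ⟨(n + 1) / 2 - k, by omega, by omega, ?_⟩
    rw [hp, chord_comm]
    rw [show 2 * ((n + 1) / 2 - k) + 1 = n + 1 - (2 * k - 1) from by omega,
        show 2 * ((n + 1) / 2 - k) = n + 1 - 2 * k from by omega]
  · left
    rw [hp, val_mul_rev σ hn1 (le_refl n)]
    norm_num

lemma isMeandric_mul_rev {n : ℕ} {σ : Equiv.Perm (Fin n)} (hn : n % 2 = 1)
    (h : IsMeandric σ) : IsMeandric (σ * reversalPerm n) := by
  have hvn := val_mem σ (by omega : (1:ℕ) ≤ n) (le_refl n)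
  have hv1 := val_mem σ (le_refl 1) (by omega : (1:ℕ) ≤ n)
  have hEl : chord (val σ n) (n + 1) ∈ lowerChords σ := by
    rw [mem_lowerChords]; right; exact ⟨hn, rfl⟩
  have hEu : chord 0 (val σ 1) ∈ upperChords σ := by
    rw [mem_upperChords]; left; rfl
  constructor
  · intro p hp q hq
    rcases upper_mul_rev_struct hn hp with hp' | ⟨c, d, hc1, hc2, hd1, hd2, hpcd, hp'⟩ <;>
      rcases upper_mul_rev_struct hn hq with hq' | ⟨c', d', hc1', hc2', hd1', hd2', hqcd, hq'⟩
    · rw [hp', hq']; exact not_cross_self _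
    · rw [hp', hqcd]
      rw [cross_zero_iff hvn.1 hvn.2 hc1' hc2' hd1' hd2']
      rw [← hqcd]
      exact h.2 _ hEl _ hq'
    · rw [hq', hpcd, cross_comm]
      rw [cross_zero_iff hvn.1 hvn.2 hc1 hc2 hd1 hd2]
      rw [← hpcd]
      exact h.2 _ hEl _ hp'
    · exact h.2 _ hp' _ hq'
  · intro p hp q hq
    rcases lower_mul_rev_struct hn hp with hp' | ⟨c, d, hc1, hc2, hd1, hd2, hpcd, hp'⟩ <;>
      rcases lower_mul_rev_struct hn hq with hq' | ⟨c', d', hc1', hc2', hd1', hd2', hqcd, hq'⟩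
    · rw [hp', hq']; exact not_cross_self _
    · rw [hp', hqcd]
      rw [← cross_zero_iff hv1.1 hv1.2 hc1' hc2' hd1' hd2']
      rw [← hqcd]
      exact h.1 _ hEu _ hq'
    · rw [hq', hpcd, cross_comm]
      rw [← cross_zero_iff hv1.1 hv1.2 hc1 hc2 hd1 hd2]
      rw [← hpcd]
      exact h.1 _ hEu _ hp'
    · exact h.1 _ hp' _ hq'


-- even case: mirror structure
lemma upper_conj_struct {n : ℕ} {σ : Equiv.Perm (Fin n)} (hn : n % 2 = 0) (hn1 : 1 ≤ n)
    {p : ℕ × ℕ} (hp : p ∈ upperChords (reversalPerm n * σ * reversalPerm n)) :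
    ∃ a b, a ≤ n + 1 ∧ b ≤ n + 1 ∧ chord a b ∈ upperChords σ ∧
      p = chord (n + 1 - a) (n + 1 - b) := by
  rw [mem_upperChords] at hp
  rcases hp with hp | ⟨k, hk1, hk2, hp⟩ | ⟨_, hp⟩
  · refine ⟨val σ n, n + 1, (val_mem σ hn1 (le_refl n)).2.trans (by omega), le_refl _, ?_, ?_⟩
    · rw [mem_upperChords]; right; right; exact ⟨hn, rfl⟩
    · rw [hp, val_conj_rev σ (le_refl 1) hn1, chord_comm]
      norm_num
  · have hb1 := val_mem σ (show 1 ≤ n + 1 - 2 * k by omega) (show n + 1 - 2 * k ≤ n by omega)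
    have hb2 := val_mem σ (show 1 ≤ n + 1 - (2 * k + 1) by omega)
      (show n + 1 - (2 * k + 1) ≤ n by omega)
    refine ⟨val σ (n + 1 - 2 * k), val σ (n + 1 - (2 * k + 1)), by omega, by omega, ?_, ?_⟩
    · rw [mem_upperChords]; right; left
      refine ⟨(n - 2 * k) / 2, by omega, by omega, ?_⟩
      rw [chord_comm]
      rw [show 2 * ((n - 2 * k) / 2) + 1 = n + 1 - 2 * k from by omega,
          show 2 * ((n - 2 * k) / 2) = n + 1 - (2 * k + 1) from by omega]
    · rw [hp, val_conj_rev σ (by omega : 1 ≤ 2 * k) (by omega : 2 * k ≤ n),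
          val_conj_rev σ (by omega : 1 ≤ 2 * k + 1) (by omega : 2 * k + 1 ≤ n)]
  · refine ⟨val σ 1, 0, (val_mem σ (le_refl 1) hn1).2.trans (by omega), by omega, ?_, ?_⟩
    · rw [mem_upperChords]; left; rw [chord_comm]
    · rw [hp, val_conj_rev σ hn1 (le_refl n)]
      rw [show n + 1 - n = 1 from by omega, show n + 1 - 0 = n + 1 from by omega]

lemma lower_conj_struct {n : ℕ} {σ : Equiv.Perm (Fin n)} (hn : n % 2 = 0)
    {p : ℕ × ℕ} (hp : p ∈ lowerChords (reversalPerm n * σ * reversalPerm n)) :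
    ∃ a b, a ≤ n + 1 ∧ b ≤ n + 1 ∧ chord a b ∈ lowerChords σ ∧
      p = chord (n + 1 - a) (n + 1 - b) := by
  rw [mem_lowerChords] at hp
  rcases hp with ⟨k, hk1, hk2, hp⟩ | ⟨h1, _⟩
  · have hb1 := val_mem σ (show 1 ≤ n + 1 - (2 * k - 1) by omega)
      (show n + 1 - (2 * k - 1) ≤ n by omega)
    have hb2 := val_mem σ (show 1 ≤ n + 1 - 2 * k by omega) (show n + 1 - 2 * k ≤ n by omega)
    refine ⟨val σ (n + 1 - (2 * k - 1)), val σ (n + 1 - 2 * k), by omega, by omega, ?_, ?_⟩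
    · rw [mem_lowerChords]; left
      refine ⟨(n + 2 - 2 * k) / 2, by omega, by omega, ?_⟩
      rw [chord_comm]
      rw [show 2 * ((n + 2 - 2 * k) / 2) - 1 = n + 1 - 2 * k from by omega,
          show 2 * ((n + 2 - 2 * k) / 2) = n + 1 - (2 * k - 1) from by omega]
    · rw [hp, val_conj_rev σ (by omega : 1 ≤ 2 * k - 1) (by omega : 2 * k - 1 ≤ n),
          val_conj_rev σ (by omega : 1 ≤ 2 * k) (by omega : 2 * k ≤ n)]
  · omega

lemma isMeandric_conj {n : ℕ} {σ : Equiv.Perm (Fin n)} (hn : n % 2 = 0) (hn1 : 1 ≤ n)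
    (h : IsMeandric σ) : IsMeandric (reversalPerm n * σ * reversalPerm n) := by
  constructor
  · intro p hp q hq
    obtain ⟨a, b, ha, hb, hab, rfl⟩ := upper_conj_struct hn hn1 hp
    obtain ⟨c, d, hc, hd, hcd, rfl⟩ := upper_conj_struct hn hn1 hq
    rw [cross_mirror ha hb hc hd]
    exact h.1 _ hab _ hcd
  · intro p hp q hq
    obtain ⟨a, b, ha, hb, hab, rfl⟩ := lower_conj_struct hn hp
    obtain ⟨c, d, hc, hd, hcd, rfl⟩ := lower_conj_struct hn hq
    rw [cross_mirror ha hb hc hd]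
    exact h.2 _ hab _ hcd


-- interval machinery
lemma isInterval_Icc (a b : ℕ) : IsInterval (Set.Icc a b) := by
  intro x hx y hy z h1 h2
  simp only [Set.mem_Icc] at *
  omega

/-- mirror set -/
def mset (n : ℕ) (S : Set ℕ) : Set ℕ := (fun v => n + 1 - v) '' S

lemma mem_mset {n : ℕ} {S : Set ℕ} (hS : S ⊆ Set.Icc 1 n) (x : ℕ) :
    x ∈ mset n S ↔ 1 ≤ x ∧ x ≤ n ∧ n + 1 - x ∈ S := by
  constructor
  · rintro ⟨v, hv, rfl⟩
    have hv' := hS hv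
    simp only [Set.mem_Icc] at hv'
    show 1 ≤ n + 1 - v ∧ n + 1 - v ≤ n ∧ n + 1 - (n + 1 - v) ∈ S
    refine ⟨by omega, by omega, ?_⟩
    rw [show n + 1 - (n + 1 - v) = v from by omega]
    exact hv
  · rintro ⟨h1, h2, h3⟩
    refine ⟨n + 1 - x, h3, ?_⟩
    show n + 1 - (n + 1 - x) = x
    omega

lemma mset_subset {n : ℕ} {S : Set ℕ} (hS : S ⊆ Set.Icc 1 n) : mset n S ⊆ Set.Icc 1 n := by
  intro x hx
  rw [mem_mset hS] at hx
  simp only [Set.mem_Icc]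
  omega

lemma mset_mset {n : ℕ} {S : Set ℕ} (hS : S ⊆ Set.Icc 1 n) : mset n (mset n S) = S := by
  ext x
  rw [mem_mset (mset_subset hS), mem_mset hS]
  constructor
  · rintro ⟨h1, h2, _, _, h3⟩
    rwa [show n + 1 - (n + 1 - x) = x from by omega] at h3
  · intro hx
    have := hS hx
    simp only [Set.mem_Icc] at this
    refine ⟨by omega, by omega, by omega, by omega, ?_⟩
    rwa [show n + 1 - (n + 1 - x) = x from by omega]

lemma ncard_mset {n : ℕ} {S : Set ℕ} (hS : S ⊆ Set.Icc 1 n) : (mset n S).ncard = S.ncard := by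
  apply Set.ncard_image_of_injOn
  intro a ha b hb hab
  have h1 := hS ha
  have h2 := hS hb
  simp only [Set.mem_Icc] at h1 h2
  simp only at hab
  omega

lemma nonempty_mset {n : ℕ} {S : Set ℕ} (h : S.Nonempty) : (mset n S).Nonempty :=
  h.image _

-- group identities
lemma rev_rev_eq (n : ℕ) : reversalPerm n * reversalPerm n = 1 := by
  apply Equiv.ext
  intro x
  show Fin.rev (Fin.rev x) = x
  exact Fin.rev_rev x

lemma mul_rev_rev {n : ℕ} (σ : Equiv.Perm (Fin n)) :
    σ * reversalPerm n * reversalPerm n = σ := by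
  rw [mul_assoc, rev_rev_eq, mul_one]

lemma conj_conj {n : ℕ} (σ : Equiv.Perm (Fin n)) :
    reversalPerm n * (reversalPerm n * σ * reversalPerm n) * reversalPerm n = σ := by
  have h : reversalPerm n * (reversalPerm n * σ * reversalPerm n) * reversalPerm n
      = (reversalPerm n * reversalPerm n) * σ * (reversalPerm n * reversalPerm n) := by
    simp only [mul_assoc]
  rw [h, rev_rev_eq, one_mul, mul_one]

-- double interval transfer (any parity)
lemma di_mul_rev {n : ℕ} {σ : Equiv.Perm (Fin n)} {S : Set ℕ}
    (h : IsDoubleInterval σ S) : IsDoubleInterval (σ * reversalPerm n) S := by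
  obtain ⟨hne, hsub, hint, hpre⟩ := h
  refine ⟨hne, hsub, hint, ?_⟩
  intro x hx y hy z h1 h2
  simp only [Set.mem_setOf_eq, Set.mem_Icc] at hx hy ⊢
  obtain ⟨⟨hx1, hx2⟩, hxv⟩ := hx
  obtain ⟨⟨hy1, hy2⟩, hyv⟩ := hy
  rw [val_mul_rev σ hx1 hx2] at hxv
  rw [val_mul_rev σ hy1 hy2] at hyv
  have hz1 : 1 ≤ z := by omega
  have hz2 : z ≤ n := by omega
  refine ⟨⟨hz1, hz2⟩, ?_⟩
  rw [val_mul_rev σ hz1 hz2]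
  have := hpre (n + 1 - y) (by simp only [Set.mem_setOf_eq, Set.mem_Icc]; exact ⟨⟨by omega, by omega⟩, hyv⟩)
    (n + 1 - x) (by simp only [Set.mem_setOf_eq, Set.mem_Icc]; exact ⟨⟨by omega, by omega⟩, hxv⟩)
    (n + 1 - z) (by omega) (by omega)
  simp only [Set.mem_setOf_eq, Set.mem_Icc] at this
  exact this.2

lemma di_conj {n : ℕ} {σ : Equiv.Perm (Fin n)} {S : Set ℕ}
    (h : IsDoubleInterval σ S) :
    IsDoubleInterval (reversalPerm n * σ * reversalPerm n) (mset n S) := by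
  obtain ⟨hne, hsub, hint, hpre⟩ := h
  refine ⟨nonempty_mset hne, mset_subset hsub, ?_, ?_⟩
  · intro x hx y hy z h1 h2
    rw [mem_mset hsub] at hx hy ⊢
    refine ⟨by omega, by omega, ?_⟩
    exact hint _ hy.2.2 _ hx.2.2 _ (by omega) (by omega)
  · intro x hx y hy z h1 h2
    simp only [Set.mem_setOf_eq, Set.mem_Icc] at hx hy ⊢
    obtain ⟨⟨hx1, hx2⟩, hxv⟩ := hx
    obtain ⟨⟨hy1, hy2⟩, hyv⟩ := hy
    have hz1 : 1 ≤ z := by omega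
    have hz2 : z ≤ n := by omega
    rw [val_conj_rev σ hx1 hx2, mem_mset hsub] at hxv
    rw [val_conj_rev σ hy1 hy2, mem_mset hsub] at hyv
    have hbx := val_mem σ (show 1 ≤ n + 1 - x by omega) (show n + 1 - x ≤ n by omega)
    have hby := val_mem σ (show 1 ≤ n + 1 - y by omega) (show n + 1 - y ≤ n by omega)
    have hbz := val_mem σ (show 1 ≤ n + 1 - z by omega) (show n + 1 - z ≤ n by omega)
    have hxv' : val σ (n + 1 - x) ∈ S := by
      rw [show n + 1 - (n + 1 - val σ (n + 1 - x)) = val σ (n + 1 - x) from by omega] at hxv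
      exact hxv.2.2
    have hyv' : val σ (n + 1 - y) ∈ S := by
      rw [show n + 1 - (n + 1 - val σ (n + 1 - y)) = val σ (n + 1 - y) from by omega] at hyv
      exact hyv.2.2
    have hz : val σ (n + 1 - z) ∈ S := by
      have := hpre (n + 1 - y)
        (by simp only [Set.mem_setOf_eq, Set.mem_Icc]; exact ⟨⟨by omega, by omega⟩, hyv'⟩)
        (n + 1 - x)
        (by simp only [Set.mem_setOf_eq, Set.mem_Icc]; exact ⟨⟨by omega, by omega⟩, hxv'⟩)
        (n + 1 - z) (by omega) (by omega)
      simp only [Set.mem_setOf_eq, Set.mem_Icc] at this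
      exact this.2
    refine ⟨⟨hz1, hz2⟩, ?_⟩
    rw [val_conj_rev σ hz1 hz2, mem_mset hsub]
    refine ⟨by omega, by omega, ?_⟩
    rwa [show n + 1 - (n + 1 - val σ (n + 1 - z)) = val σ (n + 1 - z) from by omega]


-- transfers of irreducibility and cup count
lemma di_mul_rev_iff {n : ℕ} {σ : Equiv.Perm (Fin n)} {S : Set ℕ} :
    IsDoubleInterval (σ * reversalPerm n) S ↔ IsDoubleInterval σ S := by
  constructor
  · intro h
    have := di_mul_rev h
    rwa [mul_rev_rev] at this
  · exact di_mul_rev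

lemma isIrreducible_mul_rev {n : ℕ} {σ : Equiv.Perm (Fin n)} (h : IsIrreducible σ) :
    IsIrreducible (σ * reversalPerm n) := by
  rintro ⟨S, hDI, h2, h3⟩
  exact h ⟨S, di_mul_rev_iff.mp hDI, h2, h3⟩

lemma cupCount_mul_rev {n : ℕ} (σ : Equiv.Perm (Fin n)) :
    cupCount (σ * reversalPerm n) = cupCount σ := by
  unfold cupCount
  congr 1
  ext S
  simp only [Set.mem_setOf_eq, IsCup, di_mul_rev_iff]

lemma isIrreducible_conj {n : ℕ} {σ : Equiv.Perm (Fin n)} (h : IsIrreducible σ) :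
    IsIrreducible (reversalPerm n * σ * reversalPerm n) := by
  rintro ⟨S, hDI, h2, h3⟩
  have hDI' := di_conj hDI
  rw [conj_conj] at hDI'
  refine h ⟨mset n S, hDI', ?_, ?_⟩ <;> rw [ncard_mset hDI.2.1] <;> assumption

lemma cupCount_conj {n : ℕ} (σ : Equiv.Perm (Fin n)) :
    cupCount (reversalPerm n * σ * reversalPerm n) = cupCount σ := by
  unfold cupCount
  have himg : {S : Set ℕ | IsCup (reversalPerm n * σ * reversalPerm n) S}
      = (mset n) '' {S : Set ℕ | IsCup σ S} := by
    ext S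
    simp only [Set.mem_setOf_eq, Set.mem_image]
    constructor
    · intro hS
      have hDI' := di_conj hS.1
      rw [conj_conj] at hDI'
      refine ⟨mset n S, ⟨hDI', by rw [ncard_mset hS.1.2.1]; exact hS.2⟩, mset_mset hS.1.2.1⟩
    · rintro ⟨T, hT, rfl⟩
      exact ⟨di_conj hT.1, by rw [ncard_mset hT.1.2.1]; exact hT.2⟩
  rw [himg, Set.ncard_image_of_injOn]
  intro S hS T hT h
  simp only [Set.mem_setOf_eq] at hS hT
  rw [← mset_mset hS.1.2.1, h, mset_mset hT.1.2.1]

-- fixed point freeness, odd case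
lemma mul_rev_ne {n : ℕ} (hn : 2 ≤ n) (σ : Equiv.Perm (Fin n)) : σ * reversalPerm n ≠ σ := by
  intro h
  have h0 : (σ * reversalPerm n) ⟨0, by omega⟩ = σ ⟨0, by omega⟩ := by rw [h]
  rw [Equiv.Perm.mul_apply] at h0
  have h1 := σ.injective h0
  have h2 : ((reversalPerm n) ⟨0, by omega⟩ : Fin n) = Fin.rev ⟨0, by omega⟩ := rfl
  rw [h2] at h1
  have h3 : (Fin.rev (⟨0, by omega⟩ : Fin n) : ℕ) = (⟨0, by omega⟩ : Fin n) := by rw [h1]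
  rw [Fin.val_rev] at h3
  simp only [Fin.val_mk] at h3
  omega


lemma even_fixed_reducible {n : ℕ} {σ : Equiv.Perm (Fin n)} (hn2 : n % 2 = 0) (hn4 : 4 ≤ n)
    (hm : IsMeandric σ) (hfix : reversalPerm n * σ * reversalPerm n = σ) :
    ¬ IsIrreducible σ := by
  set m := n / 2 with hmdef
  have hmn : 2 * m = n := by omega
  -- symmetry of values
  have sym : ∀ k, 1 ≤ k → k ≤ n → val σ (n + 1 - k) = n + 1 - val σ k := by
    intro k h1 h2
    have h := val_conj_rev σ h1 h2
    rw [hfix] at h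
    have b1 := val_mem σ h1 h2
    have b2 := val_mem σ (show 1 ≤ n + 1 - k by omega) (show n + 1 - k ≤ n by omega)
    omega
  have hv1b := val_mem σ (le_refl 1) (show (1:ℕ) ≤ n by omega)
  -- step (s1): val σ 1 ≤ m
  have ha1 : val σ 1 ≤ m := by
    by_contra hgt
    push_neg at hgt
    have e1 : chord 0 (val σ 1) ∈ upperChords σ := by rw [mem_upperChords]; left; rfl
    have e2 : chord (val σ n) (n + 1) ∈ upperChords σ := by
      rw [mem_upperChords]; right; right; exact ⟨hn2, rfl⟩
    apply hm.1 _ e1 _ e2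
    have hvn : val σ n = n + 1 - val σ 1 := by
      have := sym 1 (le_refl 1) (by omega)
      rwa [show n + 1 - 1 = n from by omega] at this
    rw [hvn]
    simp only [chord, Cross]
    omega
  -- step (s2): all of the first half of positions map into the left half
  have key : ∀ k, 1 ≤ k → k ≤ m → val σ k ≤ m := by
    intro k
    induction k with
    | zero => intro h _; exact absurd h (by omega)
    | succ k ih =>
      intro _ hk
      rcases Nat.eq_zero_or_pos k with rfl | hkpos
      · exact ha1
      · have hak : val σ k ≤ m := ih hkpos (by omega)
        by_contra hgt
        push_neg at hgt
        have hbA := val_mem σ hkpos (show k ≤ n by omega)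
        have hbB := val_mem σ (show 1 ≤ k + 1 by omega) (show k + 1 ≤ n by omega)
        -- values are not mirror-symmetric (else k = m)
        have hABne : val σ k + val σ (k + 1) ≠ n + 1 := by
          intro heq
          have hs := sym k hkpos (by omega)
          have : val σ (k + 1) = val σ (n + 1 - k) := by omega
          have := val_inj σ (by omega) (by omega) (by omega) (by omega) this
          omega
        have hs1 : val σ (n - k) = n + 1 - val σ (k + 1) := by
          have := sym (k + 1) (by omega) (by omega)
          rwa [show n + 1 - (k + 1) = n - k from by omega] at this
        have hs2 : val σ (n + 1 - k) = n + 1 - val σ k := sym k hkpos (by omega)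
        rcases Nat.even_or_odd k with ⟨k₀, hk₀⟩ | ⟨k₀, hk₀⟩
        · -- k even : both chords are upper chords
          have c1 : chord (val σ k) (val σ (k + 1)) ∈ upperChords σ := by
            rw [mem_upperChords]; right; left
            exact ⟨k₀, by omega, by omega, by rw [show 2 * k₀ = k from by omega]⟩
          have c2 : chord (val σ (n - k)) (val σ (n + 1 - k)) ∈ upperChords σ := by
            rw [mem_upperChords]; right; left
            refine ⟨(n - k) / 2, by omega, by omega, ?_⟩
            rw [show 2 * ((n - k) / 2) = n - k from by omega,
                show n - k + 1 = n + 1 - k from by omega]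
          apply hm.1 _ c1 _ c2
          rw [hs1, hs2]
          simp only [chord, Cross]
          omega
        · -- k odd : both chords are lower chords
          have c1 : chord (val σ k) (val σ (k + 1)) ∈ lowerChords σ := by
            rw [mem_lowerChords]; left
            exact ⟨k₀ + 1, by omega, by omega,
              by rw [show 2 * (k₀ + 1) - 1 = k from by omega, show 2 * (k₀ + 1) = k + 1 from by omega]⟩
          have c2 : chord (val σ (n - k)) (val σ (n + 1 - k)) ∈ lowerChords σ := by
            rw [mem_lowerChords]; left
            refine ⟨(n + 1 - k) / 2, by omega, by omega, ?_⟩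
            rw [show 2 * ((n + 1 - k) / 2) - 1 = n - k from by omega,
                show 2 * ((n + 1 - k) / 2) = n + 1 - k from by omega]
          apply hm.2 _ c1 _ c2
          rw [hs1, hs2]
          simp only [chord, Cross]
          omega
  -- step (s4): Icc 1 m is a double interval
  have hpre : {k | k ∈ Set.Icc 1 n ∧ val σ k ∈ Set.Icc 1 m} = Set.Icc 1 m := by
    ext k
    simp only [Set.mem_setOf_eq, Set.mem_Icc]
    constructor
    · rintro ⟨⟨h1, h2⟩, _, h4⟩
      refine ⟨h1, ?_⟩
      by_contra hk
      push_neg at hk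
      have h5 := key (n + 1 - k) (by omega) (by omega)
      have h6 := sym k h1 h2
      have := val_mem σ h1 h2
      omega
    · rintro ⟨h1, h2⟩
      have h3 := key k h1 h2
      have h4 := val_mem σ h1 (by omega)
      exact ⟨⟨h1, by omega⟩, by omega, h3⟩
  have hDIm : IsDoubleInterval σ (Set.Icc 1 m) := by
    refine ⟨⟨1, by simp only [Set.mem_Icc]; omega⟩, ?_, isInterval_Icc 1 m, ?_⟩
    · intro x hx
      simp only [Set.mem_Icc] at hx ⊢
      omega
    · rw [hpre]; exact isInterval_Icc 1 m
  have hcardm : (Set.Icc 1 m).ncard = m := by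
    rw [← Finset.coe_Icc, Set.ncard_coe_finset, Nat.card_Icc]
    omega
  rcases Nat.lt_or_ge n 6 with hn6 | hn6
  · -- n = 4 case
    have hn4' : n = 4 := by omega
    have hm2 : m = 2 := by omega
    subst hn4'
    -- determine values
    have hk1 := key 1 (by omega) (by omega)
    have hk2 := key 2 (by omega) (by omega)
    have hb1 := val_mem σ (show (1:ℕ) ≤ 1 by omega) (show (1:ℕ) ≤ 4 by omega)
    have hb2 := val_mem σ (show (1:ℕ) ≤ 2 by omega) (show (2:ℕ) ≤ 4 by omega)
    have hne12 : val σ 1 ≠ val σ 2 := fun h => by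
      have := val_inj σ (by omega) (by omega) (by omega) (by omega) h; omega
    have hs3 : val σ 3 = 5 - val σ 2 := by
      have := sym 2 (by omega) (by omega)
      rwa [show 4 + 1 - 2 = 3 from by omega] at this
    have hs4 : val σ 4 = 5 - val σ 1 := by
      have := sym 1 (by omega) (by omega)
      rwa [show 4 + 1 - 1 = 4 from by omega] at this
    have hv1 : val σ 1 = 1 := by
      by_contra h21
      have hv12 : val σ 1 = 2 := by omega
      have hv21 : val σ 2 = 1 := by omega
      have c1 : chord 0 (val σ 1) ∈ upperChords σ := by rw [mem_upperChords]; left; rfl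
      have c2 : chord (val σ 2) (val σ 3) ∈ upperChords σ := by
        rw [mem_upperChords]; right; left
        exact ⟨1, by omega, by omega, rfl⟩
      apply hm.1 _ c1 _ c2
      rw [hv12, hv21, hs3, hv21]
      simp only [chord, Cross]
      omega
    have hv2 : val σ 2 = 2 := by omega
    have hv3 : val σ 3 = 3 := by rw [hs3, hv2]
    have hv4 : val σ 4 = 4 := by rw [hs4, hv1]
    intro hirr
    apply hirr
    refine ⟨Set.Icc 1 3, ⟨⟨1, by simp only [Set.mem_Icc]; omega⟩, ?_, isInterval_Icc 1 3, ?_⟩, ?_, ?_⟩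
    · intro x hx; simp only [Set.mem_Icc] at hx ⊢; omega
    · have : {k | k ∈ Set.Icc 1 4 ∧ val σ k ∈ Set.Icc 1 3} = Set.Icc 1 3 := by
        ext k
        simp only [Set.mem_setOf_eq, Set.mem_Icc]
        constructor
        · rintro ⟨⟨h1, h2⟩, _, h4⟩
          refine ⟨h1, ?_⟩
          by_contra hk
          have hk4 : k = 4 := by omega
          rw [hk4, hv4] at h4
          omega
        · rintro ⟨h1, h2⟩
          refine ⟨⟨h1, by omega⟩, ?_, ?_⟩ <;>
            interval_cases k <;> simp [hv1, hv2, hv3]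
      rw [this]; exact isInterval_Icc 1 3
    · rw [← Finset.coe_Icc, Set.ncard_coe_finset, Nat.card_Icc]; omega
    · rw [← Finset.coe_Icc, Set.ncard_coe_finset, Nat.card_Icc]; omega
  · -- n ≥ 6
    intro hirr
    exact hirr ⟨Set.Icc 1 m, hDIm, by rw [hcardm]; omega, by rw [hcardm]; omega⟩


/-- For every `n ≥ 4` and every `c`, the number `M^{Irr}_{n,c}` of
irreducible meandric permutations of `{1,…,n}` with exactly `c` cups is even. -/
theorem irrCupCount_even (n c : ℕ) (hn : 4 ≤ n) : 2 ∣ irrCupCount n c := by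
  unfold irrCupCount
  rcases Nat.even_or_odd n with he | ho
  · have hn2 : n % 2 = 0 := Nat.even_iff.mp he
    have hn1 : 1 ≤ n := by omega
    apply even_card_of_involutive
      (f := fun x : {σ : Equiv.Perm (Fin n) // IsMeandric σ ∧ IsIrreducible σ ∧ cupCount σ = c} =>
        ⟨reversalPerm n * x.1 * reversalPerm n,
          isMeandric_conj hn2 hn1 x.2.1, isIrreducible_conj x.2.2.1,
          by rw [cupCount_conj]; exact x.2.2.2⟩)
    · intro x
      apply Subtype.ext
      exact conj_conj x.1
    · intro x h
      have hfix := congrArg Subtype.val h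
      exact (even_fixed_reducible hn2 hn x.2.1 hfix) x.2.2.1
  · have hn2 : n % 2 = 1 := Nat.odd_iff.mp ho
    apply even_card_of_involutive
      (f := fun x : {σ : Equiv.Perm (Fin n) // IsMeandric σ ∧ IsIrreducible σ ∧ cupCount σ = c} =>
        ⟨x.1 * reversalPerm n, isMeandric_mul_rev hn2 x.2.1,
          isIrreducible_mul_rev x.2.2.1, by rw [cupCount_mul_rev]; exact x.2.2.2⟩)
    · intro x
      apply Subtype.ext
      exact mul_rev_rev x.1
    · intro x h
      exact mul_rev_ne (by omega) x.1 (congrArg Subtype.val h)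


end MeanderFormal
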